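/- For every r ∈ ℝ, the function s ↦ σ(s;r) is differentiable on (s₀, ∞) with ∂_s σ(s;r) = −s (r − R(s)) ∫₀¹ H_p(p;s)³ dp. -/

import Mathlib

open MeasureTheory Set Filter

noncomputable section

/-- `Omeg ω p = ∫₀^p ω(t) dt`, the primitive of the vorticity function. -/
def Omeg (ω : ℝ → ℝ) (p : ℝ) : ℝ := ∫ t in (0:ℝ)..p, ω t

/-- `s0 ω = sqrt (max_{p ∈ [0,1]} 2 Ω(p))`. -/
def s0 (ω : ℝ → ℝ) : ℝ := Real.sqrt (sSup ((fun p => 2 * Omeg ω p) '' Icc (0:ℝ) 1))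

/-- `Hp ω p s = (s² − 2Ω(p))^{-1/2}`. -/
def Hp (ω : ℝ → ℝ) (p s : ℝ) : ℝ := (Real.sqrt (s ^ 2 - 2 * Omeg ω p))⁻¹

/-- `Hfun ω p s = H(p; s) = ∫₀^p (s² − 2Ω(τ))^{-1/2} dτ`. -/
def Hfun (ω : ℝ → ℝ) (p s : ℝ) : ℝ := ∫ τ in (0:ℝ)..p, Hp ω τ s

/-- `dd ω s = d(s) = H(1; s)`. -/
def dd (ω : ℝ → ℝ) (s : ℝ) : ℝ := Hfun ω 1 s

/-- `RR ω s = R(s) = s²/2 − Ω(1) + d(s)`, the Bernoulli constant of the stream solution. -/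
def RR (ω : ℝ → ℝ) (s : ℝ) : ℝ := s ^ 2 / 2 - Omeg ω 1 + dd ω s

/-- `sigmaFun ω s r = σ(s; r)`. -/
def sigmaFun (ω : ℝ → ℝ) (s r : ℝ) : ℝ :=
  ∫ p in (0:ℝ)..1,
    (1 / (2 * (Hp ω p s) ^ 2) - Hfun ω p s - Omeg ω p + Omeg ω 1 + r) * Hp ω p s

/-- Partial derivative in the first (horizontal) variable `q`. -/
def dq (f : ℝ → ℝ → ℝ) (q p : ℝ) : ℝ := deriv (fun x => f x p) q

/-- Partial derivative in the second (vertical) variable `p`. -/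
def dp (f : ℝ → ℝ → ℝ) (q p : ℝ) : ℝ := deriv (fun y => f q y) p

/-- The height system with Bernoulli constant `r` on the strip `S = ℝ × [0,1]`. -/
structure HeightSol (ω : ℝ → ℝ) (r : ℝ) (h : ℝ → ℝ → ℝ) : Prop where
  smooth : ContDiff ℝ 2 (Function.uncurry h)
  hp_pos : ∀ q : ℝ, ∀ p ∈ Icc (0:ℝ) 1, 0 < dp h q p
  pde : ∀ q : ℝ, ∀ p ∈ Icc (0:ℝ) 1,
    (1 + (dq h q p) ^ 2) / (dp h q p) ^ 2 * dp (dp h) q p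
      - 2 * (dq h q p) / (dp h q p) * dp (dq h) q p
      + dq (dq h) q p - ω p * dp h q p = 0
  top : ∀ q : ℝ, (1 + (dq h q 1) ^ 2) / (2 * (dp h q 1) ^ 2) + h q 1 = r
  bot : ∀ q : ℝ, h q 0 = 0

/-- The flow force of a height function `h`, computed on the vertical line through `q`. -/
def flowForce (ω : ℝ → ℝ) (r : ℝ) (h : ℝ → ℝ → ℝ) (q : ℝ) : ℝ :=
  ∫ p in (0:ℝ)..1,
    ((1 - (dq h q p) ^ 2) / (2 * (dp h q p) ^ 2) - h q p - Omeg ω p + Omeg ω 1 + r) * dp h q p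

/-- `wfun ω s h = w^{(s)} = h − H(·; s)`. -/
def wfun (ω : ℝ → ℝ) (s : ℝ) (h : ℝ → ℝ → ℝ) (q p : ℝ) : ℝ := h q p - Hfun ω p s

/-- The flow force flux function `Φ^{(s)}`. -/
def Phi (ω : ℝ → ℝ) (s : ℝ) (h : ℝ → ℝ → ℝ) (q p : ℝ) : ℝ :=
  ∫ p' in (0:ℝ)..p,
    ((dp (wfun ω s h) q p') ^ 2 / (dp h q p' * (Hp ω p' s) ^ 2)
      - (dq (wfun ω s h) q p') ^ 2 / dp h q p')

/-- `h ∈ C^{2,γ}(S̄)`: `h` is twice continuously differentiable, all partial derivatives of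
order ≤ 2 are bounded on the strip, and the second-order derivatives are uniformly
γ-Hölder continuous on the strip. -/
def C2Holder (γ : ℝ) (h : ℝ → ℝ → ℝ) : Prop :=
  ContDiff ℝ 2 (Function.uncurry h) ∧
  (∀ g ∈ ([h, dq h, dp h, dq (dq h), dp (dq h), dp (dp h)] : List (ℝ → ℝ → ℝ)),
    ∃ M : ℝ, ∀ q : ℝ, ∀ p ∈ Icc (0:ℝ) 1, |g q p| ≤ M) ∧
  (∀ g ∈ ([dq (dq h), dp (dq h), dp (dp h)] : List (ℝ → ℝ → ℝ)),
    ∃ C : ℝ, ∀ q q' : ℝ, ∀ p ∈ Icc (0:ℝ) 1, ∀ p' ∈ Icc (0:ℝ) 1,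
      |g q p - g q' p'| ≤ C * Real.sqrt ((q - q') ^ 2 + (p - p') ^ 2) ^ γ)

end

section Stmt7Aux

variable {ω : ℝ → ℝ}

lemma omeg_hasDerivAt (hω : Continuous ω) (p : ℝ) : HasDerivAt (Omeg ω) (ω p) p :=
  (hω.integral_hasStrictDerivAt 0 p).hasDerivAt

lemma omeg_continuous (hω : Continuous ω) : Continuous (Omeg ω) := by
  have h : Differentiable ℝ (Omeg ω) := fun p => (omeg_hasDerivAt hω p).differentiableAt
  exact h.continuous

lemma two_omeg_le (hω : Continuous ω) {p : ℝ} (hp : p ∈ Icc (0:ℝ) 1) :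
    2 * Omeg ω p ≤ (s0 ω) ^ 2 := by
  have hcont : Continuous fun p => 2 * Omeg ω p := continuous_const.mul (omeg_continuous hω)
  have hbdd : BddAbove ((fun p => 2 * Omeg ω p) '' Icc (0:ℝ) 1) :=
    (isCompact_Icc.image hcont).bddAbove
  have h0 : (0:ℝ) ∈ (fun p => 2 * Omeg ω p) '' Icc (0:ℝ) 1 := by
    refine ⟨0, ⟨le_refl _, zero_le_one⟩, ?_⟩
    simp [Omeg]
  have hSnonneg : 0 ≤ sSup ((fun p => 2 * Omeg ω p) '' Icc (0:ℝ) 1) := le_csSup hbdd h0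
  have hsq : (s0 ω) ^ 2 = sSup ((fun p => 2 * Omeg ω p) '' Icc (0:ℝ) 1) :=
    Real.sq_sqrt hSnonneg
  rw [hsq]
  exact le_csSup hbdd ⟨p, hp, rfl⟩

lemma delta_le (hω : Continuous ω) {c x p : ℝ} (hc : s0 ω < c) (hcx : c ≤ x)
    (hp : p ∈ Icc (0:ℝ) 1) : c ^ 2 - (s0 ω) ^ 2 ≤ x ^ 2 - 2 * Omeg ω p := by
  have h1 := two_omeg_le hω hp
  have hs0 : 0 ≤ s0 ω := Real.sqrt_nonneg _
  nlinarith

lemma A_pos (hω : Continuous ω) {x p : ℝ} (hx : s0 ω < x) (hp : p ∈ Icc (0:ℝ) 1) :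
    0 < x ^ 2 - 2 * Omeg ω p := by
  have h := delta_le hω hx le_rfl hp
  have hs0 : 0 ≤ s0 ω := Real.sqrt_nonneg _
  nlinarith

lemma sqrtA_hasDerivAt {C x : ℝ} (h : 0 < x ^ 2 - C) :
    HasDerivAt (fun y => Real.sqrt (y ^ 2 - C)) (x * (Real.sqrt (x ^ 2 - C))⁻¹) x := by
  have h1 : HasDerivAt (fun y : ℝ => y ^ 2 - C) (2 * x) x := by
    simpa using (hasDerivAt_pow 2 x).sub_const C
  have h2 := (Real.hasDerivAt_sqrt h.ne').comp x h1
  have hs : Real.sqrt (x ^ 2 - C) ≠ 0 := (Real.sqrt_pos.mpr h).ne'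
  refine h2.congr_deriv ?_
  field_simp

lemma hp_hasDerivAt {C x : ℝ} (h : 0 < x ^ 2 - C) :
    HasDerivAt (fun y => (Real.sqrt (y ^ 2 - C))⁻¹)
      (-x * ((Real.sqrt (x ^ 2 - C))⁻¹) ^ 3) x := by
  have hs : Real.sqrt (x ^ 2 - C) ≠ 0 := (Real.sqrt_pos.mpr h).ne'
  have h2 := (sqrtA_hasDerivAt h).inv hs
  have hg := Real.mul_self_sqrt h.le
  refine h2.congr_deriv ?_
  ring

lemma hp_continuousOn (hω : Continuous ω) {x : ℝ} (hx : s0 ω < x) :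
    ContinuousOn (fun p => Hp ω p x) (Icc (0:ℝ) 1) := by
  have h1 : Continuous fun p => Real.sqrt (x ^ 2 - 2 * Omeg ω p) :=
    Real.continuous_sqrt.comp (continuous_const.sub (continuous_const.mul (omeg_continuous hω)))
  exact h1.continuousOn.inv₀ fun p hp => (Real.sqrt_pos.mpr (A_pos hω hx hp)).ne'

lemma hp_intervalIntegrable (hω : Continuous ω) {x : ℝ} (hx : s0 ω < x) :
    IntervalIntegrable (fun p => Hp ω p x) MeasureTheory.volume 0 1 := by
  apply ContinuousOn.intervalIntegrable
  rw [uIcc_of_le zero_le_one]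
  exact hp_continuousOn hω hx

lemma hfun_hasDerivAt (hω : Continuous ω) {x : ℝ} (hx : s0 ω < x) {p : ℝ}
    (hp : p ∈ Icc (0:ℝ) 1) : HasDerivAt (fun q => Hfun ω q x) (Hp ω p x) p := by
  set U : Set ℝ := {q | 0 < x ^ 2 - 2 * Omeg ω q} with hU
  have hUopen : IsOpen U :=
    isOpen_lt continuous_const (continuous_const.sub (continuous_const.mul (omeg_continuous hω)))
  have hsub : Icc (0:ℝ) 1 ⊆ U := fun q hq => A_pos hω hx hq
  have hcont : ContinuousOn (fun q => Hp ω q x) U := by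
    have h1 : Continuous fun q => Real.sqrt (x ^ 2 - 2 * Omeg ω q) :=
      Real.continuous_sqrt.comp (continuous_const.sub (continuous_const.mul (omeg_continuous hω)))
    exact h1.continuousOn.inv₀ fun q hq => (Real.sqrt_pos.mpr hq).ne'
  have hint : IntervalIntegrable (fun q => Hp ω q x) MeasureTheory.volume 0 p := by
    apply ContinuousOn.intervalIntegrable
    apply (hp_continuousOn hω hx).mono
    rw [uIcc_of_le hp.1]
    exact Icc_subset_Icc le_rfl hp.2
  exact intervalIntegral.integral_hasDerivAt_right hint
    (hcont.stronglyMeasurableAtFilter hUopen p (hsub hp))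
    (hcont.continuousAt (hUopen.mem_nhds (hsub hp)))

lemma sigma_eq (hω : Continuous ω) (r : ℝ) {x : ℝ} (hx : s0 ω < x) :
    sigmaFun ω x r = (∫ p in (0:ℝ)..1, Real.sqrt (x ^ 2 - 2 * Omeg ω p))
      - (dd ω x) ^ 2 / 2 + (Omeg ω 1 + r - x ^ 2 / 2) * dd ω x := by
  have hA : ∀ p ∈ Icc (0:ℝ) 1, 0 < x ^ 2 - 2 * Omeg ω p := fun p hp => A_pos hω hx hp
  have hHder : ∀ p ∈ Icc (0:ℝ) 1, HasDerivAt (fun q => Hfun ω q x) (Hp ω p x) p :=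
    fun p hp => hfun_hasDerivAt hω hx hp
  have hHcont : ContinuousOn (fun p => Hfun ω p x) (Icc (0:ℝ) 1) :=
    fun p hp => ((hHder p hp).continuousAt).continuousWithinAt
  have hsqrtcont : Continuous fun p => Real.sqrt (x ^ 2 - 2 * Omeg ω p) :=
    Real.continuous_sqrt.comp (continuous_const.sub (continuous_const.mul (omeg_continuous hω)))
  have i1 : IntervalIntegrable (fun p => Real.sqrt (x ^ 2 - 2 * Omeg ω p))
      MeasureTheory.volume 0 1 := hsqrtcont.intervalIntegrable 0 1
  have iHp := hp_intervalIntegrable hω hx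
  have i2 : IntervalIntegrable (fun p => Hfun ω p x * Hp ω p x) MeasureTheory.volume 0 1 := by
    apply ContinuousOn.intervalIntegrable
    rw [uIcc_of_le zero_le_one]
    exact hHcont.mul (hp_continuousOn hω hx)
  have i3 : IntervalIntegrable (fun p => (Omeg ω 1 + r - x ^ 2 / 2) * Hp ω p x)
      MeasureTheory.volume 0 1 := iHp.const_mul _
  have hptw : EqOn
      (fun p => (1 / (2 * (Hp ω p x) ^ 2) - Hfun ω p x - Omeg ω p + Omeg ω 1 + r) * Hp ω p x)
      (fun p => Real.sqrt (x ^ 2 - 2 * Omeg ω p) - Hfun ω p x * Hp ω p x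
        + (Omeg ω 1 + r - x ^ 2 / 2) * Hp ω p x) (uIcc (0:ℝ) 1) := by
    intro p hp
    rw [uIcc_of_le zero_le_one] at hp
    have hApos := hA p hp
    have hg : Real.sqrt (x ^ 2 - 2 * Omeg ω p) * Real.sqrt (x ^ 2 - 2 * Omeg ω p)
        = x ^ 2 - 2 * Omeg ω p := Real.mul_self_sqrt hApos.le
    have hgne : Real.sqrt (x ^ 2 - 2 * Omeg ω p) ≠ 0 := (Real.sqrt_pos.mpr hApos).ne'
    simp only [Hp]
    field_simp
    nlinarith [hg]
  have hmul : ∫ p in (0:ℝ)..1, Hfun ω p x * Hp ω p x = (dd ω x) ^ 2 / 2 := by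
    have key : ∫ p in (0:ℝ)..1, Hfun ω p x * Hp ω p x
        = (Hfun ω 1 x) ^ 2 / 2 - (Hfun ω 0 x) ^ 2 / 2 := by
      apply intervalIntegral.integral_eq_sub_of_hasDerivAt (f := fun p => Hfun ω p x ^ 2 / 2)
      · intro p hp
        rw [uIcc_of_le zero_le_one] at hp
        have h := ((hHder p hp).pow 2).div_const 2
        refine h.congr_deriv ?_
        push_cast
        ring_nf
      · exact i2
    have h0 : Hfun ω 0 x = 0 := by simp [Hfun]
    rw [key, h0, dd]
    ring
  have hconst : ∫ p in (0:ℝ)..1, (Omeg ω 1 + r - x ^ 2 / 2) * Hp ω p x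
      = (Omeg ω 1 + r - x ^ 2 / 2) * dd ω x := by
    rw [intervalIntegral.integral_const_mul]
    rfl
  rw [sigmaFun, intervalIntegral.integral_congr hptw,
    intervalIntegral.integral_add (i1.sub i2) i3, intervalIntegral.integral_sub i1 i2,
    hmul, hconst]

end Stmt7Aux

/-- for every `r`, `s ↦ σ(s;r)` is differentiable on `(s₀, ∞)` with
`∂_s σ(s;r) = −s (r − R(s)) ∫₀¹ H_p(p;s)³ dp`. -/
theorem stmt7 (ω : ℝ → ℝ) (hω : Continuous ω) (r : ℝ) :
    ∀ s ∈ Ioi (s0 ω),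
      HasDerivAt (fun s' => sigmaFun ω s' r)
        (-s * (r - RR ω s) * ∫ p in (0:ℝ)..1, (Hp ω p s) ^ 3) s := by
  intro s hs
  rw [mem_Ioi] at hs
  have hs0 : 0 ≤ s0 ω := Real.sqrt_nonneg _
  set ε := (s - s0 ω) / 2 with hεdef
  have hεpos : 0 < ε := by rw [hεdef]; linarith
  set c := (s + s0 ω) / 2 with hcdef
  have hcs0 : s0 ω < c := by rw [hcdef]; linarith
  have hcpos : 0 < c := lt_of_le_of_lt hs0 hcs0
  set δ := c ^ 2 - s0 ω ^ 2 with hδdef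
  have hδpos : 0 < δ := by rw [hδdef]; nlinarith
  have hce : c = s - ε := by rw [hcdef, hεdef]; ring
  have hball : ∀ x ∈ Metric.ball s ε, c ≤ x ∧ x ≤ s + ε := by
    intro x hx
    rw [Metric.mem_ball, Real.dist_eq, abs_lt] at hx
    exact ⟨by linarith [hx.1], by linarith [hx.2]⟩
  have hAx : ∀ x, c ≤ x → ∀ p ∈ Icc (0:ℝ) 1, δ ≤ x ^ 2 - 2 * Omeg ω p :=
    fun x hcx p hp => delta_le hω hcs0 hcx hp
  have hmeasA : ∀ x : ℝ, Continuous fun p => Real.sqrt (x ^ 2 - 2 * Omeg ω p) := fun x =>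
    Real.continuous_sqrt.comp (continuous_const.sub (continuous_const.mul (omeg_continuous hω)))
  have hballpos : ∀ x ∈ Metric.ball s ε, ∀ p ∈ Icc (0:ℝ) 1, 0 < x ^ 2 - 2 * Omeg ω p :=
    fun x hx p hp => lt_of_lt_of_le hδpos (hAx x (hball x hx).1 p hp)
  have hsqrtδpos : 0 < Real.sqrt δ := Real.sqrt_pos.mpr hδpos
  have hHp_ub : ∀ x ∈ Metric.ball s ε, ∀ p ∈ Icc (0:ℝ) 1,
      Hp ω p x ≤ (Real.sqrt δ)⁻¹ ∧ 0 < Hp ω p x := by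
    intro x hx p hp
    have h1 : Real.sqrt δ ≤ Real.sqrt (x ^ 2 - 2 * Omeg ω p) :=
      Real.sqrt_le_sqrt (hAx x (hball x hx).1 p hp)
    constructor
    · exact inv_anti₀ hsqrtδpos h1
    · exact inv_pos.mpr (lt_of_lt_of_le hsqrtδpos h1)
  have hxabs : ∀ x ∈ Metric.ball s ε, |x| ≤ s + ε := by
    intro x hx
    have h1 := hball x hx
    rw [abs_of_pos (lt_of_lt_of_le hcpos h1.1)]
    exact h1.2
  -- derivative of G
  have hG : HasDerivAt (fun x => ∫ p in (0:ℝ)..1, Real.sqrt (x ^ 2 - 2 * Omeg ω p))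
      (∫ p in (0:ℝ)..1, s * Hp ω p s) s := by
    refine (intervalIntegral.hasDerivAt_integral_of_dominated_loc_of_deriv_le
      (F := fun x p => Real.sqrt (x ^ 2 - 2 * Omeg ω p))
      (F' := fun x p => x * Hp ω p x) (a := 0) (b := 1) (μ := MeasureTheory.volume)
      (bound := fun _ => (s + ε) * (Real.sqrt δ)⁻¹) (Metric.ball_mem_nhds s hεpos)
      (Filter.Eventually.of_forall fun x => (hmeasA x).aestronglyMeasurable)
      ((hmeasA s).intervalIntegrable 0 1)
      (((hmeasA s).measurable.inv.const_mul s).aestronglyMeasurable)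
      ?_ intervalIntegrable_const ?_).2
    · apply Filter.Eventually.of_forall
      intro p hp x hx
      rw [uIoc_of_le zero_le_one] at hp
      have hp' : p ∈ Icc (0:ℝ) 1 := Ioc_subset_Icc_self hp
      have h2 := hHp_ub x hx p hp'
      rw [Real.norm_eq_abs, abs_mul, abs_of_pos h2.2]
      exact mul_le_mul (hxabs x hx) h2.1 h2.2.le (by linarith)
    · apply Filter.Eventually.of_forall
      intro p hp x hx
      rw [uIoc_of_le zero_le_one] at hp
      exact sqrtA_hasDerivAt (hballpos x hx p (Ioc_subset_Icc_self hp))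
  -- derivative of dd
  have hD : HasDerivAt (dd ω) (∫ p in (0:ℝ)..1, -s * Hp ω p s ^ 3) s := by
    refine (intervalIntegral.hasDerivAt_integral_of_dominated_loc_of_deriv_le
      (F := fun x p => Hp ω p x) (F' := fun x p => -x * Hp ω p x ^ 3)
      (a := 0) (b := 1) (μ := MeasureTheory.volume)
      (bound := fun _ => (s + ε) * ((Real.sqrt δ)⁻¹) ^ 3) (Metric.ball_mem_nhds s hεpos)
      (Filter.Eventually.of_forall fun x => ((hmeasA x).measurable.inv).aestronglyMeasurable)
      (hp_intervalIntegrable hω hs)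
      ((((hmeasA s).measurable.inv.pow_const 3).const_mul (-s)).aestronglyMeasurable)
      ?_ intervalIntegrable_const ?_).2
    · apply Filter.Eventually.of_forall
      intro p hp x hx
      rw [uIoc_of_le zero_le_one] at hp
      have hp' : p ∈ Icc (0:ℝ) 1 := Ioc_subset_Icc_self hp
      have h2 := hHp_ub x hx p hp'
      rw [Real.norm_eq_abs, abs_mul, abs_neg, abs_pow, abs_of_pos h2.2]
      exact mul_le_mul (hxabs x hx) (pow_le_pow_left₀ h2.2.le h2.1 3)
        (pow_nonneg h2.2.le 3) (by linarith)
    · apply Filter.Eventually.of_forall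
      intro p hp x hx
      rw [uIoc_of_le zero_le_one] at hp
      exact hp_hasDerivAt (hballpos x hx p (Ioc_subset_Icc_self hp))
  set K := ∫ p in (0:ℝ)..1, Hp ω p s ^ 3 with hKdef
  have hDval : HasDerivAt (dd ω) (-s * K) s := by
    rwa [intervalIntegral.integral_const_mul] at hD
  have hGval : HasDerivAt (fun x => ∫ p in (0:ℝ)..1, Real.sqrt (x ^ 2 - 2 * Omeg ω p))
      (s * dd ω s) s := by
    rw [intervalIntegral.integral_const_mul] at hG
    exact hG
  have hsq : HasDerivAt (fun x : ℝ => x ^ 2) (2 * s) s := by simpa using hasDerivAt_pow 2 s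
  have hf : HasDerivAt (fun x : ℝ => Omeg ω 1 + r - x ^ 2 / 2) (-(2 * s / 2)) s :=
    HasDerivAt.const_sub _ (hsq.div_const 2)
  have hq : HasDerivAt (fun x => dd ω x ^ 2 / 2) ((2:ℕ) * dd ω s ^ 1 * (-s * K) / 2) s :=
    (hDval.pow 2).div_const 2
  have hΦ := (hGval.sub hq).add (hf.mul hDval)
  have hfinal : HasDerivAt (fun x => (∫ p in (0:ℝ)..1, Real.sqrt (x ^ 2 - 2 * Omeg ω p))
      - dd ω x ^ 2 / 2 + (Omeg ω 1 + r - x ^ 2 / 2) * dd ω x)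
      (-s * (r - RR ω s) * K) s := by
    refine hΦ.congr_deriv ?_
    rw [RR]
    push_cast
    ring
  have hEv : (fun s' => sigmaFun ω s' r) =ᶠ[nhds s] fun x =>
      (∫ p in (0:ℝ)..1, Real.sqrt (x ^ 2 - 2 * Omeg ω p)) - dd ω x ^ 2 / 2
        + (Omeg ω 1 + r - x ^ 2 / 2) * dd ω x := by
    filter_upwards [isOpen_Ioi.mem_nhds (show s ∈ Ioi (s0 ω) from hs)] with x hx
    exact sigma_eq hω r hx
  exact hfinal.congr_of_eventuallyEq hEv
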